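/- Let X be an arbitrary set and let s, t be μ-expressions in T X. The following are equivalent: (i) for every μ-continuous Chomsky algebra K and every interpretation σ : T X → K, σ(s) = σ(t); (ii) for every set Y and every map from X to languages over Y, the structurally induced language interpretation τ : T X → P(Y*) (with τ a homomorphism for the semiring operations on languages and τ(μx.t) = ⋃_{n≥0} τ(nx.t)) satisfies τ(s) = τ(t); (iii) L_X(s) = L_X(t) for the canonical interpretation L_X. -/

import Mathlib

/-- μ-expressions over a set `X` of variables:
`t ::= x | t + t | t·t | 0 | 1 | μx.t`. -/
inductive MuTerm (X : Type) : Type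
  | var : X → MuTerm X
  | zero : MuTerm X
  | one : MuTerm X
  | add : MuTerm X → MuTerm X → MuTerm X
  | mul : MuTerm X → MuTerm X → MuTerm X
  | mu : X → MuTerm X → MuTerm X

namespace MuTerm

variable {X : Type}

/-- Size of a term (used for termination of substitution). -/
def size : MuTerm X → ℕ
  | var _ => 1
  | zero => 1
  | one => 1
  | add s t => size s + size t + 1
  | mul s t => size s + size t + 1
  | mu _ t => size t + 1

variable [DecidableEq X]

/-- Free variables of a μ-expression. -/
def fv : MuTerm X → Finset X
  | var x => {x}
  | zero => ∅
  | one => ∅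
  | add s t => fv s ∪ fv t
  | mul s t => fv s ∪ fv t
  | mu x t => fv t \ {x}

/-- All (free and bound) variables of a μ-expression. -/
def vars : MuTerm X → Finset X
  | var x => {x}
  | zero => ∅
  | one => ∅
  | add s t => vars s ∪ vars t
  | mul s t => vars s ∪ vars t
  | mu x t => insert x (vars t)

/-- Rename free occurrences of the variable `y` to `z`. -/
def rename (y z : X) : MuTerm X → MuTerm X
  | var x => if x = y then var z else var x
  | zero => zero
  | one => one
  | add s t => add (rename y z s) (rename y z t)
  | mul s t => mul (rename y z s) (rename y z t)
  | mu x t => if x = y then mu x t else mu x (rename y z t)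

theorem size_rename (y z : X) : ∀ t : MuTerm X, (rename y z t).size = t.size
  | var x => by simp only [rename]; split <;> rfl
  | zero => rfl
  | one => rfl
  | add s t => by simp [rename, size, size_rename y z s, size_rename y z t]
  | mul s t => by simp [rename, size, size_rename y z s, size_rename y z t]
  | mu x t => by
      simp only [rename]; split
      · rfl
      · simp [size, size_rename y z t]

variable [Infinite X]

/-- Capture-avoiding substitution `t[x := u]`: substitute `u` for the free
occurrences of `x` in the last argument, renaming bound variables to fresh
ones to avoid capture. -/
noncomputable def subst (x : X) (u : MuTerm X) : MuTerm X → MuTerm X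
  | var y => if y = x then u else var y
  | zero => zero
  | one => one
  | add s t => add (subst x u s) (subst x u t)
  | mul s t => mul (subst x u s) (subst x u t)
  | mu y t =>
    if y = x then mu y t
    else
      let z : X := Classical.choose (Infinite.exists_notMem_finset (vars t ∪ fv u ∪ {x}))
      mu z (subst x u (rename y z t))
  termination_by t => size t
  decreasing_by
    all_goals simp only [size, size_rename]
    all_goals omega

/-- The `n`-th approximant `nx.t`: `0x.t = 0`, `(n+1)x.t = t[x := nx.t]`. -/
noncomputable def napprox : ℕ → X → MuTerm X → MuTerm X
  | 0, _, _ => zero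
  | n + 1, x, t => subst x (napprox n x t) t

end MuTerm

/-- Polynomial functions over a semiring `C` in `n` indeterminates: functions
built from constants in `C`, projections, addition, and multiplication. -/
inductive IsPolyFun {C : Type} [Semiring C] : {n : ℕ} → ((Fin n → C) → C) → Prop
  | const {n : ℕ} (c : C) : IsPolyFun fun _ : Fin n → C => c
  | proj {n : ℕ} (i : Fin n) : IsPolyFun fun v => v i
  | add {n : ℕ} {p q : (Fin n → C) → C} :
      IsPolyFun p → IsPolyFun q → IsPolyFun fun v => p v + q v
  | mul {n : ℕ} {p q : (Fin n → C) → C} :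
      IsPolyFun p → IsPolyFun q → IsPolyFun fun v => p v * q v

/-- A Chomsky algebra is an idempotent semiring (ordered by `a ≤ b ↔ a + b = b`)
in which every finite system of polynomial inequalities `pᵢ ≤ xᵢ` has a least
solution. -/
class ChomskyAlgebra (C : Type) extends IdemSemiring C where
  algClosed : ∀ {n : ℕ} (p : Fin n → (Fin n → C) → C), (∀ i, IsPolyFun (p i)) →
    ∃ sol : Fin n → C, (∀ i, p i sol ≤ sol i) ∧
      ∀ τ : Fin n → C, (∀ i, p i τ ≤ τ i) → ∀ i, sol i ≤ τ i

/-- `IsInterp eval` says that `eval` is the family of interpretations of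
μ-expressions over the Chomsky algebra `C`, one for each valuation `v : X → C`:
each `eval v` is a homomorphism with respect to the semiring operations, and
`eval v (μx.t)` is the least `a` with `eval v[x↦a] t ≤ a`. -/
structure IsInterp {X C : Type} [DecidableEq X] [Infinite X] [ChomskyAlgebra C]
    (eval : (X → C) → MuTerm X → C) : Prop where
  var : ∀ (v : X → C) (x : X), eval v (.var x) = v x
  zero : ∀ v, eval v .zero = 0
  one : ∀ v, eval v .one = 1
  add : ∀ v s t, eval v (.add s t) = eval v s + eval v t
  mul : ∀ v s t, eval v (.mul s t) = eval v s * eval v t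
  mu : ∀ (v : X → C) (x : X) (t : MuTerm X),
    IsLeast {a : C | eval (Function.update v x a) t ≤ a} (eval v (.mu x t))

/-- A Chomsky algebra `C` is μ-continuous if for every interpretation `σ` over
`C`, all `c, d ∈ C`, and every term `t`,
`c·σ(μx.t)·d = sup_{n ≥ 0} c·σ(nx.t)·d` (in particular the supremum exists). -/
def MuContinuous (C : Type) [ChomskyAlgebra C] : Prop :=
  ∀ (X : Type) [DecidableEq X] [Infinite X] (eval : (X → C) → MuTerm X → C),
    IsInterp eval → ∀ (v : X → C) (c d : C) (x : X) (t : MuTerm X),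
      IsLUB (Set.range fun n : ℕ => c * eval v (MuTerm.napprox n x t) * d)
        (c * eval v (.mu x t) * d)

/-- A language interpretation `τ : T X → P(Y*)`: a homomorphism for the
semiring operations on languages with `τ(μx.t) = ⋃ n, τ(nx.t)`. -/
structure IsLangInterp {X Y : Type} [DecidableEq X] [Infinite X]
    (τ : MuTerm X → Language Y) : Prop where
  zero : τ .zero = 0
  one : τ .one = 1
  add : ∀ s t, τ (.add s t) = τ s + τ t
  mul : ∀ s t, τ (.mul s t) = τ s * τ t
  mu : ∀ (x : X) (t : MuTerm X), τ (.mu x t) = ⨆ n : ℕ, τ (MuTerm.napprox n x t)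

/-- The canonical interpretation `L_X : T X → P(X*)`: the language
interpretation with `L_X(x) = {x}`. -/
def IsCanonicalInterp {X : Type} [DecidableEq X] [Infinite X]
    (L : MuTerm X → Language X) : Prop :=
  IsLangInterp L ∧ ∀ x : X, L (.var x) = {[x]}

/-- For a word `w = x₁⋯x_k ∈ X*` and `σ : X → K`, `wordProd σ w` is the
product `σ(x₁)⋯σ(x_k)` in `K`, with the empty word mapped to `1`. -/
def wordProd {X K : Type} [Monoid K] (σ : X → K) (w : List X) : K :=
  (w.map σ).prod

/-- `IsLangEval E` says that `E` is the family of structurally induced language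
interpretations, one for each assignment `σ : X → P(Y*)` of languages to
variables: each `E σ` is a homomorphism for the semiring operations on
languages, with `E σ (μx.t) = ⋃ n, E σ (nx.t)`. -/
structure IsLangEval {X Y : Type} [DecidableEq X] [Infinite X]
    (E : (X → Language Y) → MuTerm X → Language Y) : Prop where
  var : ∀ (σ : X → Language Y) (x : X), E σ (.var x) = σ x
  zero : ∀ σ, E σ .zero = 0
  one : ∀ σ, E σ .one = 1
  add : ∀ σ s t, E σ (.add s t) = E σ s + E σ t
  mul : ∀ σ s t, E σ (.mul s t) = E σ s * E σ t
  mu : ∀ (σ : X → Language Y) (x : X) (t : MuTerm X),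
    E σ (.mu x t) = ⨆ n : ℕ, E σ (MuTerm.napprox n x t)

section Aux

namespace MuTerm

variable {X : Type}

theorem size_pos : ∀ t : MuTerm X, 0 < size t
  | var _ => Nat.one_pos
  | zero => Nat.one_pos
  | one => Nat.one_pos
  | add _ _ => by simp [size]
  | mul _ _ => by simp [size]
  | mu _ _ => by simp [size]

variable [DecidableEq X]

theorem mem_vars_of_mem_fv {y : X} : ∀ {t : MuTerm X}, y ∈ fv t → y ∈ vars t
  | var _, h => h
  | add s t, h => by
      simp only [fv, Finset.mem_union] at h
      simp only [vars, Finset.mem_union]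
      exact h.imp mem_vars_of_mem_fv mem_vars_of_mem_fv
  | mul s t, h => by
      simp only [fv, Finset.mem_union] at h
      simp only [vars, Finset.mem_union]
      exact h.imp mem_vars_of_mem_fv mem_vars_of_mem_fv
  | mu x t, h => by
      simp only [fv, Finset.mem_sdiff] at h
      simp only [vars, Finset.mem_insert]
      exact Or.inr (mem_vars_of_mem_fv h.1)

variable [Infinite X]

/-- The fresh variable used by `subst` in the `mu` case. -/
noncomputable def freshVar (t u : MuTerm X) (x : X) : X :=
  Classical.choose (Infinite.exists_notMem_finset (vars t ∪ fv u ∪ {x}))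

theorem freshVar_not_mem (t u : MuTerm X) (x : X) :
    freshVar t u x ∉ vars t ∪ fv u ∪ {x} :=
  Classical.choose_spec (Infinite.exists_notMem_finset (vars t ∪ fv u ∪ {x}))

theorem freshVar_spec (t u : MuTerm X) (x : X) :
    freshVar t u x ∉ vars t ∧ freshVar t u x ∉ fv u ∧ freshVar t u x ≠ x := by
  have h := freshVar_not_mem t u x
  simp only [Finset.mem_union, Finset.mem_singleton, not_or] at h
  exact ⟨h.1.1, h.1.2, h.2⟩

@[simp] theorem subst_var (x : X) (u : MuTerm X) (y : X) :
    subst x u (var y) = if y = x then u else var y := by simp [subst]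

@[simp] theorem subst_zero (x : X) (u : MuTerm X) : subst x u zero = zero := by simp [subst]

@[simp] theorem subst_one (x : X) (u : MuTerm X) : subst x u one = one := by simp [subst]

@[simp] theorem subst_add (x : X) (u s t : MuTerm X) :
    subst x u (add s t) = add (subst x u s) (subst x u t) := by simp [subst]

@[simp] theorem subst_mul (x : X) (u s t : MuTerm X) :
    subst x u (mul s t) = mul (subst x u s) (subst x u t) := by simp [subst]

theorem subst_mu_eq (x : X) (u t : MuTerm X) : subst x u (mu x t) = mu x t := by
  simp [subst]

theorem subst_mu_ne (x : X) (u : MuTerm X) {y : X} (t : MuTerm X) (h : y ≠ x) :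
    subst x u (mu y t) = mu (freshVar t u x) (subst x u (rename y (freshVar t u x) t)) := by
  simp [subst, h, freshVar]

end MuTerm

end Aux
set_option linter.unusedSectionVars false

/-- Locally nameless representation of μ-expressions. -/
inductive DBT (X : Type) : Type
  | zero : DBT X
  | one : DBT X
  | fvar : X → DBT X
  | bvar : ℕ → DBT X
  | add : DBT X → DBT X → DBT X
  | mul : DBT X → DBT X → DBT X
  | mub : DBT X → DBT X

namespace DBT

variable {X : Type} [DecidableEq X]

/-- Abstract the free variable `x` as the bound index `k`. -/
def absAux (x : X) : ℕ → DBT X → DBT X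
  | _, zero => zero
  | _, one => one
  | k, fvar y => if y = x then bvar k else fvar y
  | _, bvar j => bvar j
  | k, add s t => add (absAux x k s) (absAux x k t)
  | k, mul s t => mul (absAux x k s) (absAux x k t)
  | k, mub t => mub (absAux x (k + 1) t)

/-- Instantiate the bound index `k` with the term `A`. -/
def instAux (A : DBT X) : ℕ → DBT X → DBT X
  | _, zero => zero
  | _, one => one
  | _, fvar y => fvar y
  | k, bvar j => if j = k then A else bvar j
  | k, add s t => add (instAux A k s) (instAux A k t)
  | k, mul s t => mul (instAux A k s) (instAux A k t)
  | k, mub t => mub (instAux A (k + 1) t)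

/-- Simultaneous substitution for free variables. -/
def sSub (v : X → DBT X) : DBT X → DBT X
  | zero => zero
  | one => one
  | fvar y => v y
  | bvar j => bvar j
  | add s t => add (sSub v s) (sSub v t)
  | mul s t => mul (sSub v s) (sSub v t)
  | mub t => mub (sSub v t)

/-- All bound indices are `< k`. -/
def lcAt : ℕ → DBT X → Prop
  | _, zero => True
  | _, one => True
  | _, fvar _ => True
  | k, bvar j => j < k
  | k, add s t => lcAt k s ∧ lcAt k t
  | k, mul s t => lcAt k s ∧ lcAt k t
  | k, mub t => lcAt (k + 1) t

/-- Free variables. -/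
def DFV : DBT X → Finset X
  | zero => ∅
  | one => ∅
  | fvar y => {y}
  | bvar _ => ∅
  | add s t => DFV s ∪ DFV t
  | mul s t => DFV s ∪ DFV t
  | mub t => DFV t

theorem absAux_of_not_mem {x : X} : ∀ {D : DBT X}, x ∉ DFV D → ∀ k, absAux x k D = D
  | zero, _, _ => rfl
  | one, _, _ => rfl
  | fvar y, h, k => by
      simp only [DFV, Finset.mem_singleton] at h
      simp [absAux, Ne.symm h]
  | bvar j, _, _ => rfl
  | add s t, h, k => by
      simp only [DFV, Finset.mem_union, not_or] at h
      simp [absAux, absAux_of_not_mem h.1, absAux_of_not_mem h.2]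
  | mul s t, h, k => by
      simp only [DFV, Finset.mem_union, not_or] at h
      simp [absAux, absAux_of_not_mem h.1, absAux_of_not_mem h.2]
  | mub t, h, k => by
      simp only [DFV] at h
      simp [absAux, absAux_of_not_mem h]

theorem instAux_of_lcAt {A : DBT X} :
    ∀ {D : DBT X} {k j : ℕ}, lcAt k D → k ≤ j → instAux A j D = D
  | zero, _, _, _, _ => rfl
  | one, _, _, _, _ => rfl
  | fvar y, _, _, _, _ => rfl
  | bvar i, k, j, h, hkj => by
      simp only [lcAt] at h
      simp [instAux, show i ≠ j by omega]
  | add s t, _, _, h, hkj => by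
      simp [instAux, instAux_of_lcAt h.1 hkj, instAux_of_lcAt h.2 hkj]
  | mul s t, _, _, h, hkj => by
      simp [instAux, instAux_of_lcAt h.1 hkj, instAux_of_lcAt h.2 hkj]
  | mub t, k, j, h, hkj => by
      simp only [lcAt] at h
      simp [instAux, instAux_of_lcAt h (by omega : k + 1 ≤ j + 1)]

theorem lcAt_absAux {x : X} : ∀ (D : DBT X) (k : ℕ), lcAt k D → lcAt (k + 1) (absAux x k D)
  | zero, _, _ => trivial
  | one, _, _ => trivial
  | fvar y, k, _ => by
      simp only [absAux]
      split
      · simp [lcAt]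
      · trivial
  | bvar j, k, h => by simp only [lcAt, absAux] at *; omega
  | add s t, k, h => ⟨lcAt_absAux s k h.1, lcAt_absAux t k h.2⟩
  | mul s t, k, h => ⟨lcAt_absAux s k h.1, lcAt_absAux t k h.2⟩
  | mub t, k, h => lcAt_absAux t (k + 1) h

theorem sSub_sSub (v v' : X → DBT X) :
    ∀ D : DBT X, sSub v (sSub v' D) = sSub (fun y => sSub v (v' y)) D
  | zero => rfl
  | one => rfl
  | fvar y => rfl
  | bvar j => rfl
  | add s t => by simp [sSub, sSub_sSub v v' s, sSub_sSub v v' t]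
  | mul s t => by simp [sSub, sSub_sSub v v' s, sSub_sSub v v' t]
  | mub t => by simp [sSub, sSub_sSub v v' t]

theorem sSub_id : ∀ D : DBT X, sSub fvar D = D
  | zero => rfl
  | one => rfl
  | fvar y => rfl
  | bvar j => rfl
  | add s t => by simp [sSub, sSub_id s, sSub_id t]
  | mul s t => by simp [sSub, sSub_id s, sSub_id t]
  | mub t => by simp [sSub, sSub_id t]

theorem sSub_congr {v v' : X → DBT X} :
    ∀ {D : DBT X}, (∀ y ∈ DFV D, v y = v' y) → sSub v D = sSub v' D
  | zero, _ => rfl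
  | one, _ => rfl
  | fvar y, h => h y (by simp [DFV])
  | bvar j, _ => rfl
  | add s t, h => by
      simp only [DFV, Finset.mem_union] at h
      simp [sSub, sSub_congr (fun y hy => h y (Or.inl hy)),
        sSub_congr (fun y hy => h y (Or.inr hy))]
  | mul s t, h => by
      simp only [DFV, Finset.mem_union] at h
      simp [sSub, sSub_congr (fun y hy => h y (Or.inl hy)),
        sSub_congr (fun y hy => h y (Or.inr hy))]
  | mub t, h => by
      simp only [DFV] at h
      simp [sSub, sSub_congr h]

/-- `sSub` with a substitution killing `x` fixes `absAux x k D`. -/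
theorem sSub_absAux_self (x : X) (U : DBT X) :
    ∀ (D : DBT X) (k : ℕ), sSub (Function.update fvar x U) (absAux x k D) = absAux x k D
  | zero, _ => rfl
  | one, _ => rfl
  | fvar y, k => by
      by_cases h : y = x
      · simp [absAux, h, sSub]
      · simp [absAux, h, sSub, Function.update_of_ne h]
  | bvar j, _ => rfl
  | add s t, k => by simp [absAux, sSub, sSub_absAux_self x U s, sSub_absAux_self x U t]
  | mul s t, k => by simp [absAux, sSub, sSub_absAux_self x U s, sSub_absAux_self x U t]
  | mub t, k => by simp [absAux, sSub, sSub_absAux_self x U t]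

/-- C1: `sSub` commutes with abstraction of an untouched variable. -/
theorem sSub_absAux_comm {v : X → DBT X} {w : X} (hw : v w = fvar w)
    (hv : ∀ x, x ≠ w → ∀ k, absAux w k (v x) = v x) :
    ∀ (D : DBT X) (k : ℕ), sSub v (absAux w k D) = absAux w k (sSub v D)
  | zero, _ => rfl
  | one, _ => rfl
  | fvar y, k => by
      by_cases h : y = w
      · subst h; simp [absAux, sSub, hw]
      · simp [absAux, h, sSub, hv y h]
  | bvar j, _ => rfl
  | add s t, k => by simp [absAux, sSub, sSub_absAux_comm hw hv s, sSub_absAux_comm hw hv t]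
  | mul s t, k => by simp [absAux, sSub, sSub_absAux_comm hw hv s, sSub_absAux_comm hw hv t]
  | mub t, k => by simp [absAux, sSub, sSub_absAux_comm hw hv t]

/-- C3. -/
theorem absAux_sSub {x y z : X} {U : DBT X} (hzx : z ≠ x) (hxy : x ≠ y)
    (hU : ∀ j, absAux z j U = U) :
    ∀ {D : DBT X}, z ∉ DFV D → ∀ k,
      absAux z k (sSub (fun w => if w = y then fvar z else if w = x then U else fvar w) D) =
        sSub (Function.update fvar x U) (absAux y k D)
  | zero, _, _ => rfl
  | one, _, _ => rfl
  | fvar w, hz, k => by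
      simp only [DFV, Finset.mem_singleton] at hz
      by_cases hwy : w = y
      · subst hwy; simp [absAux, sSub, hxy.symm]
      · by_cases hwx : w = x
        · subst hwx; simp [absAux, sSub, hwy, hU]
        · simp [absAux, sSub, hwy, hwx, Ne.symm hz, Function.update_of_ne hwx]
  | bvar j, _, _ => rfl
  | add s t, hz, k => by
      simp only [DFV, Finset.mem_union, not_or] at hz
      simp [absAux, sSub, absAux_sSub hzx hxy hU hz.1, absAux_sSub hzx hxy hU hz.2]
  | mul s t, hz, k => by
      simp only [DFV, Finset.mem_union, not_or] at hz
      simp [absAux, sSub, absAux_sSub hzx hxy hU hz.1, absAux_sSub hzx hxy hU hz.2]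
  | mub t, hz, k => by
      simp only [DFV] at hz
      simp [absAux, sSub, absAux_sSub hzx hxy hU hz]

/-- C4: free substitution as instantiation of an abstraction. -/
theorem sSub_eq_instAux_absAux {x : X} {A : DBT X} :
    ∀ {D : DBT X} {k : ℕ}, lcAt k D →
      sSub (Function.update fvar x A) D = instAux A k (absAux x k D)
  | zero, _, _ => rfl
  | one, _, _ => rfl
  | fvar y, k, _ => by
      by_cases h : y = x
      · subst h; simp [absAux, sSub, instAux]
      · simp [absAux, h, sSub, instAux, Function.update_of_ne h]
  | bvar j, k, h => by
      simp only [lcAt] at h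
      simp [absAux, sSub, instAux, show j ≠ k by omega]
  | add s t, _, h => by
      simp [absAux, sSub, instAux, sSub_eq_instAux_absAux h.1, sSub_eq_instAux_absAux h.2]
  | mul s t, _, h => by
      simp [absAux, sSub, instAux, sSub_eq_instAux_absAux h.1, sSub_eq_instAux_absAux h.2]
  | mub t, k, h => by
      simp only [lcAt] at h
      simp [absAux, sSub, instAux, sSub_eq_instAux_absAux h]

/-- C5. -/
theorem instAux_sSub_absAux {A : DBT X} {v : X → DBT X} {w : X}
    (hv : ∀ y j, instAux A j (v y) = v y) :
    ∀ {D : DBT X} {k : ℕ}, lcAt k D →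
      instAux A k (sSub v (absAux w k D)) = sSub (Function.update v w A) D
  | zero, _, _ => rfl
  | one, _, _ => rfl
  | fvar y, k, _ => by
      by_cases h : y = w
      · subst h; simp [absAux, sSub, instAux]
      · simp [absAux, h, sSub, instAux, hv, Function.update_of_ne h]
  | bvar j, k, h => by
      simp only [lcAt] at h
      simp [absAux, sSub, instAux, show j ≠ k by omega]
  | add s t, _, h => by
      simp [absAux, sSub, instAux, instAux_sSub_absAux hv h.1, instAux_sSub_absAux hv h.2]
  | mul s t, _, h => by
      simp [absAux, sSub, instAux, instAux_sSub_absAux hv h.1, instAux_sSub_absAux hv h.2]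
  | mub t, k, h => by
      simp only [lcAt] at h
      simp [absAux, sSub, instAux, instAux_sSub_absAux hv h]

end DBT
namespace MuTerm

variable {X : Type} [DecidableEq X]

/-- Locally nameless image of a μ-expression. -/
def db : MuTerm X → DBT X
  | var x => DBT.fvar x
  | zero => DBT.zero
  | one => DBT.one
  | add s t => DBT.add (db s) (db t)
  | mul s t => DBT.mul (db s) (db t)
  | mu x t => DBT.mub (DBT.absAux x 0 (db t))

theorem lcAt_db : ∀ (t : MuTerm X), DBT.lcAt 0 (db t)
  | var _ => trivial
  | zero => trivial
  | one => trivial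
  | add s t => ⟨lcAt_db s, lcAt_db t⟩
  | mul s t => ⟨lcAt_db s, lcAt_db t⟩
  | mu x t => DBT.lcAt_absAux (db t) 0 (lcAt_db t)

theorem DFV_db : ∀ t : MuTerm X, DBT.DFV (db t) = fv t
  | var _ => rfl
  | zero => rfl
  | one => rfl
  | add s t => by simp [db, DBT.DFV, fv, DFV_db s, DFV_db t]
  | mul s t => by simp [db, DBT.DFV, fv, DFV_db s, DFV_db t]
  | mu x t => by
      have habs : ∀ (D : DBT X) (k : ℕ), DBT.DFV (DBT.absAux x k D) = DBT.DFV D \ {x} := by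
        intro D
        induction D with
        | zero => simp [DBT.absAux, DBT.DFV]
        | one => simp [DBT.absAux, DBT.DFV]
        | fvar y =>
            intro k
            by_cases h : y = x
            · simp [DBT.absAux, h, DBT.DFV]
            · simp only [DBT.absAux, if_neg h, DBT.DFV]
              exact (Finset.sdiff_eq_self_iff_disjoint.2
                (by simp; exact fun hc => h hc)).symm
        | bvar j => simp [DBT.absAux, DBT.DFV]
        | add s t ihs iht => intro k; simp [DBT.absAux, DBT.DFV, ihs, iht, Finset.union_sdiff_distrib]
        | mul s t ihs iht => intro k; simp [DBT.absAux, DBT.DFV, ihs, iht, Finset.union_sdiff_distrib]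
        | mub t iht => intro k; simp [DBT.absAux, DBT.DFV, iht]
      simp [db, DBT.DFV, fv, habs, DFV_db t]

variable [Infinite X]

/-- M1: de Bruijn image of a (fresh) renaming. -/
theorem db_rename {z : X} (y : X) :
    ∀ t : MuTerm X, z ∉ vars t →
      db (rename y z t) = DBT.sSub (Function.update DBT.fvar y (DBT.fvar z)) (db t)
  | var w, hz => by
      by_cases h : w = y
      · subst h; simp [rename, db, DBT.sSub]
      · simp [rename, h, db, DBT.sSub, Function.update_of_ne h]
  | zero, _ => rfl
  | one, _ => rfl
  | add s t, hz => by
      simp only [vars, Finset.mem_union, not_or] at hz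
      simp [rename, db, DBT.sSub, db_rename y s hz.1, db_rename y t hz.2]
  | mul s t, hz => by
      simp only [vars, Finset.mem_union, not_or] at hz
      simp [rename, db, DBT.sSub, db_rename y s hz.1, db_rename y t hz.2]
  | mu w t, hz => by
      simp only [vars, Finset.mem_insert, not_or] at hz
      by_cases h : w = y
      · subst h
        simp only [rename, if_pos rfl, ↓reduceIte, db, DBT.sSub]
        rw [DBT.sSub_absAux_self]
      · simp only [rename, if_neg h, db, DBT.sSub]
        rw [db_rename y t hz.2]
        rw [DBT.sSub_absAux_comm (Function.update_of_ne h _ _)]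
        intro x hx k
        by_cases hxy : x = y
        · subst hxy
          rw [Function.update_self]
          exact DBT.absAux_of_not_mem (by simp [DBT.DFV, Ne.symm hz.1]) k
        · rw [Function.update_of_ne hxy]
          exact DBT.absAux_of_not_mem (by simp [DBT.DFV, Ne.symm hx]) k

/-- M2 (master lemma): de Bruijn image of substitution. -/
theorem db_subst (x : X) (u : MuTerm X) :
    ∀ (n : ℕ) (t : MuTerm X), size t ≤ n →
      db (subst x u t) = DBT.sSub (Function.update DBT.fvar x (db u)) (db t) := by
  intro n
  induction n with
  | zero => intro t ht; exact absurd ht (by have := size_pos t; omega)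
  | succ n ih =>
    intro t ht
    cases t with
    | var y =>
        by_cases h : y = x
        · subst h; simp [subst_var, db, DBT.sSub]
        · simp [subst_var, h, db, DBT.sSub, Function.update_of_ne h]
    | zero => simp [subst_zero, db, DBT.sSub]
    | one => simp [subst_one, db, DBT.sSub]
    | add s t =>
        simp only [size] at ht
        simp [subst_add, db, DBT.sSub, ih s (by omega), ih t (by omega)]
    | mul s t =>
        simp only [size] at ht
        simp [subst_mul, db, DBT.sSub, ih s (by omega), ih t (by omega)]
    | mu y t =>
        simp only [size] at ht
        by_cases h : y = x
        · subst h
          rw [subst_mu_eq]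
          simp only [db, DBT.sSub]
          rw [DBT.sSub_absAux_self]
        · rw [subst_mu_ne x u t h]
          set z := freshVar t u x with hzdef
          obtain ⟨hz1, hz2, hz3⟩ := freshVar_spec t u x
          simp only [db, DBT.sSub]
          rw [ih (rename y z t) (by rw [size_rename]; omega), db_rename y t hz1,
            DBT.sSub_sSub]
          have hfun : (fun w => DBT.sSub (Function.update DBT.fvar x (db u))
              (Function.update DBT.fvar y (DBT.fvar z) w)) =
              (fun w => if w = y then DBT.fvar z else
                if w = x then db u else DBT.fvar w) := by
            funext w
            by_cases hwy : w = y
            · subst hwy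
              simp [DBT.sSub, Function.update_of_ne (show z ≠ x from hz3)]
            · rw [Function.update_of_ne hwy]
              simp [DBT.sSub, Function.update_apply, hwy]
          rw [hfun, DBT.absAux_sSub hz3 (Ne.symm h)
            (fun j => DBT.absAux_of_not_mem (by rw [DFV_db]; exact hz2) j)
            (by rw [DFV_db]; exact fun hc => hz1 (mem_vars_of_mem_fv hc)) 0]

theorem db_subst' (x : X) (u t : MuTerm X) :
    db (subst x u t) = DBT.sSub (Function.update DBT.fvar x (db u)) (db t) :=
  db_subst x u (size t) t le_rfl

/-- Inversion lemmas for `db`. -/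
theorem db_eq_zero {T : MuTerm X} (h : db T = DBT.zero) : T = zero := by
  cases T
  case zero => rfl
  all_goals simp [db] at h

theorem db_eq_one {T : MuTerm X} (h : db T = DBT.one) : T = one := by
  cases T
  case one => rfl
  all_goals simp [db] at h

theorem db_eq_fvar {T : MuTerm X} {y : X} (h : db T = DBT.fvar y) : T = var y := by
  cases T
  case var w =>
    simp only [db] at h
    injection h with h1
    rw [h1]
  all_goals simp [db] at h

theorem db_eq_add {T : MuTerm X} {M N : DBT X} (h : db T = DBT.add M N) :
    ∃ S S', T = add S S' ∧ db S = M ∧ db S' = N := by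
  cases T
  case add S S' =>
    simp only [db] at h
    injection h with h1 h2
    exact ⟨S, S', rfl, h1, h2⟩
  all_goals simp [db] at h

theorem db_eq_mul {T : MuTerm X} {M N : DBT X} (h : db T = DBT.mul M N) :
    ∃ S S', T = mul S S' ∧ db S = M ∧ db S' = N := by
  cases T
  case mul S S' =>
    simp only [db] at h
    injection h with h1 h2
    exact ⟨S, S', rfl, h1, h2⟩
  all_goals simp [db] at h

theorem db_eq_mub {T : MuTerm X} {M : DBT X} (h : db T = DBT.mub M) :
    ∃ w B, T = mu w B ∧ M = DBT.absAux w 0 (db B) := by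
  cases T
  case mu w B =>
    simp only [db] at h
    injection h with h1
    exact ⟨w, B, rfl, h1.symm⟩
  all_goals simp [db] at h

end MuTerm
/-- The canonical language semantics of μ-expressions, with μ interpreted via
Kleene iterates. -/
noncomputable def langEval {X Y : Type} [DecidableEq X] :
    MuTerm X → (X → Language Y) → Language Y
  | .var x, σ => σ x
  | .zero, _ => 0
  | .one, _ => 1
  | .add s t, σ => langEval s σ + langEval t σ
  | .mul s t, σ => langEval s σ * langEval t σ
  | .mu x t, σ => ⨆ n : ℕ, (fun a => langEval t (Function.update σ x a))^[n] ⊥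

theorem lang_bot_eq_zero {Y : Type} : (⊥ : Language Y) = 0 := rfl

/-- Any language interpretation is determined on instances of a skeleton. -/
theorem grand {X Y : Type} [DecidableEq X] [Infinite X] {τ : MuTerm X → Language Y}
    (hτ : IsLangInterp τ) :
    ∀ (b : MuTerm X) (v : X → DBT X) (ρ : X → Language Y),
      (∀ y, DBT.lcAt 0 (v y)) →
      (∀ y ∈ MuTerm.fv b, ∀ T : MuTerm X, MuTerm.db T = v y → τ T = ρ y) →
      ∀ T : MuTerm X, MuTerm.db T = DBT.sSub v (MuTerm.db b) → τ T = langEval b ρ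
  | .var y, v, ρ, _, hv, T, hT => hv y (by simp [MuTerm.fv]) T hT
  | .zero, v, ρ, _, _, T, hT => by
      rw [MuTerm.db_eq_zero hT, hτ.zero]; rfl
  | .one, v, ρ, _, _, T, hT => by
      rw [MuTerm.db_eq_one hT, hτ.one]; rfl
  | .add s t, v, ρ, hlc, hv, T, hT => by
      obtain ⟨S, S', rfl, h1, h2⟩ := MuTerm.db_eq_add hT
      rw [hτ.add]
      rw [grand hτ s v ρ hlc
          (fun y hy => hv y (by simp [MuTerm.fv, hy])) S h1,
        grand hτ t v ρ hlc
          (fun y hy => hv y (by simp [MuTerm.fv, hy])) S' h2]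
      rfl
  | .mul s t, v, ρ, hlc, hv, T, hT => by
      obtain ⟨S, S', rfl, h1, h2⟩ := MuTerm.db_eq_mul hT
      rw [hτ.mul]
      rw [grand hτ s v ρ hlc
          (fun y hy => hv y (by simp [MuTerm.fv, hy])) S h1,
        grand hτ t v ρ hlc
          (fun y hy => hv y (by simp [MuTerm.fv, hy])) S' h2]
      rfl
  | .mu w b, v, ρ, hlc, hv, T, hT => by
      obtain ⟨w', B, rfl, hM⟩ := MuTerm.db_eq_mub hT
      have hdbA : ∀ n : ℕ, MuTerm.db (MuTerm.napprox (n + 1) w' B) =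
          DBT.sSub (Function.update v w (MuTerm.db (MuTerm.napprox n w' B)))
            (MuTerm.db b) := by
        intro n
        show MuTerm.db (MuTerm.subst w' (MuTerm.napprox n w' B) B) = _
        rw [MuTerm.db_subst', DBT.sSub_eq_instAux_absAux (MuTerm.lcAt_db B), ← hM,
          DBT.instAux_sSub_absAux
            (fun y j => DBT.instAux_of_lcAt (hlc y) (Nat.zero_le j))
            (MuTerm.lcAt_db b)]
      have claim : ∀ n : ℕ, ∀ T' : MuTerm X,
          MuTerm.db T' = MuTerm.db (MuTerm.napprox n w' B) →
          τ T' = (fun a => langEval b (Function.update ρ w a))^[n] ⊥ := by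
        intro n
        induction n with
        | zero =>
            intro T' hT'
            rw [MuTerm.db_eq_zero hT', hτ.zero]
            rfl
        | succ n ihn =>
            intro T' hT'
            rw [hdbA n] at hT'
            rw [grand hτ b (Function.update v w (MuTerm.db (MuTerm.napprox n w' B)))
              (Function.update ρ w ((fun a => langEval b (Function.update ρ w a))^[n] ⊥))
              (fun y => by
                by_cases hyw : y = w
                · subst hyw; rw [Function.update_self]; exact MuTerm.lcAt_db _
                · rw [Function.update_of_ne hyw]; exact hlc y)
              (fun y hy T'' hT'' => by
                by_cases hyw : y = w
                · subst hyw
                  rw [Function.update_self] at hT'' ⊢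
                  exact ihn T'' hT''
                · rw [Function.update_of_ne hyw] at hT'' ⊢
                  exact hv y (by simp [MuTerm.fv, hy, hyw]) T'' hT'')
              T' hT']
            rw [Function.iterate_succ_apply']
      rw [hτ.mu]
      show _ = ⨆ n : ℕ, (fun a => langEval b (Function.update ρ w a))^[n] ⊥
      exact iSup_congr fun n => claim n _ rfl

/-- Uniqueness: any language interpretation agrees with `langEval`. -/
theorem langInterp_eq_langEval {X Y : Type} [DecidableEq X] [Infinite X]
    {τ : MuTerm X → Language Y} (hτ : IsLangInterp τ) (σ : X → Language Y)
    (hvar : ∀ x, τ (.var x) = σ x) (u : MuTerm X) : τ u = langEval u σ := by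
  refine grand hτ u DBT.fvar σ (fun y => trivial)
    (fun y _ T hT => by rw [MuTerm.db_eq_fvar hT, hvar]) u ?_
  rw [DBT.sSub_id]
section PartB

variable {X Y : Type} [DecidableEq X]

theorem update_le_update {v v' : X → Language Y} {x : X} {a a' : Language Y}
    (h : ∀ z, v z ≤ v' z) (ha : a ≤ a') :
    ∀ z, Function.update v x a z ≤ Function.update v' x a' z := by
  intro z
  by_cases hz : z = x
  · subst hz; simp [ha]
  · simp [Function.update_of_ne hz, h z]

theorem langEval_mono : ∀ (t : MuTerm X) {v v' : X → Language Y},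
    (∀ x, v x ≤ v' x) → langEval t v ≤ langEval t v'
  | .var x, _, _, h => h x
  | .zero, _, _, _ => le_rfl
  | .one, _, _, _ => le_rfl
  | .add s t, v, v', h => add_le_add (langEval_mono s h) (langEval_mono t h)
  | .mul s t, v, v', h => mul_le_mul' (langEval_mono s h) (langEval_mono t h)
  | .mu x t, v, v', h => by
      show (⨆ n : ℕ, _) ≤ ⨆ n : ℕ, _
      refine iSup_mono fun n => ?_
      induction n with
      | zero => exact le_rfl
      | succ n ihn =>
          rw [Function.iterate_succ_apply', Function.iterate_succ_apply']
          exact langEval_mono t (update_le_update h ihn)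

theorem iterate_chain_mono {f : Language Y → Language Y} (hf : Monotone f) :
    Monotone fun n : ℕ => f^[n] ⊥ := by
  refine monotone_nat_of_le_succ fun n => ?_
  induction n with
  | zero => exact bot_le
  | succ n ihn =>
      rw [Function.iterate_succ_apply', Function.iterate_succ_apply']
      exact hf ihn

theorem sup_iSup_chain (A B : ℕ → Language Y) :
    (⨆ n, A n) ⊔ (⨆ n, B n) = ⨆ n, A n ⊔ B n := by
  refine le_antisymm (sup_le (iSup_mono fun n => le_sup_left)
    (iSup_mono fun n => le_sup_right)) (iSup_le fun n => sup_le_sup (le_iSup A n) (le_iSup B n))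

theorem langEval_cont : ∀ (t : MuTerm X) (σs : ℕ → X → Language Y),
    (∀ x, Monotone fun n => σs n x) →
    langEval t (fun x => ⨆ n, σs n x) = ⨆ n, langEval t (σs n)
  | .var x, σs, hm => rfl
  | .zero, σs, hm => (iSup_const).symm
  | .one, σs, hm => (iSup_const).symm
  | .add s t, σs, hm => by
      show langEval s _ + langEval t _ = ⨆ n, langEval s (σs n) + langEval t (σs n)
      rw [langEval_cont s σs hm, langEval_cont t σs hm]
      simp only [add_eq_sup]
      exact sup_iSup_chain _ _
  | .mul s t, σs, hm => by
      show langEval s _ * langEval t _ = ⨆ n, langEval s (σs n) * langEval t (σs n)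
      rw [langEval_cont s σs hm, langEval_cont t σs hm, Language.iSup_mul]
      refine le_antisymm (iSup_le fun n => ?_) (iSup_mono fun n => mul_le_mul' le_rfl
        (le_iSup (fun m => langEval t (σs m)) n))
      rw [Language.mul_iSup]
      refine iSup_le fun m => ?_
      calc langEval s (σs n) * langEval t (σs m)
          ≤ langEval s (σs (max n m)) * langEval t (σs (max n m)) :=
            mul_le_mul' (langEval_mono s fun x => hm x (le_max_left n m))
              (langEval_mono t fun x => hm x (le_max_right n m))
        _ ≤ _ := le_iSup (fun k => langEval s (σs k) * langEval t (σs k)) (max n m)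
  | .mu y t, σs, hm => by
      show (⨆ m : ℕ, _) = ⨆ n : ℕ, ⨆ m : ℕ, _
      have mono_g : ∀ m : ℕ, Monotone fun n =>
          (fun b => langEval t (Function.update (σs n) y b))^[m] ⊥ := by
        intro m
        induction m with
        | zero => exact monotone_const
        | succ m ihm =>
            intro n n' hnn
            dsimp only
            rw [Function.iterate_succ_apply', Function.iterate_succ_apply']
            exact langEval_mono t (update_le_update (fun x => hm x hnn) (ihm hnn))
      have claim : ∀ m : ℕ,
          (fun b => langEval t (Function.update (fun x => ⨆ n, σs n x) y b))^[m] ⊥ =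
          ⨆ n, (fun b => langEval t (Function.update (σs n) y b))^[m] ⊥ := by
        intro m
        induction m with
        | zero => exact iSup_const.symm
        | succ m ihm =>
            rw [Function.iterate_succ_apply', ihm]
            have hfun : Function.update (fun x => ⨆ n, σs n x) y
                (⨆ n, (fun b => langEval t (Function.update (σs n) y b))^[m] ⊥) =
                fun x => ⨆ n, Function.update (σs n) y
                  ((fun b => langEval t (Function.update (σs n) y b))^[m] ⊥) x := by
              funext x
              by_cases hx : x = y
              · subst hx; simp
              · simp [Function.update_of_ne hx]
            rw [hfun, langEval_cont t _ (fun x => by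
              by_cases hx : x = y
              · subst hx
                intro n n' hnn
                simp only [Function.update_self]
                exact mono_g m hnn
              · intro n n' hnn
                simp only [Function.update_of_ne hx]
                exact hm x hnn)]
            exact iSup_congr fun n =>
              (Function.iterate_succ_apply'
                (fun b => langEval t (Function.update (σs n) y b)) m ⊥).symm
      rw [iSup_congr claim]
      exact iSup_comm

theorem IsPolyFun.monotone {C : Type} [Semiring C] [PartialOrder C]
    [CovariantClass C C (· + ·) (· ≤ ·)] [CovariantClass C C (· * ·) (· ≤ ·)]
    [CovariantClass C C (Function.swap (· * ·)) (· ≤ ·)]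
    {n : ℕ} {p : (Fin n → C) → C} (hp : IsPolyFun p) : Monotone p := by
  induction hp with
  | const c => exact monotone_const
  | proj i => exact fun v w h => h i
  | add hp hq ihp ihq => exact fun v w h => add_le_add (ihp h) (ihq h)
  | mul hp hq ihp ihq => exact fun v w h => mul_le_mul' (ihp h) (ihq h)

noncomputable instance langChomsky {Y : Type} : ChomskyAlgebra (Language Y) :=
  { (inferInstance : IdemSemiring (Language Y)) with
    algClosed := by
      intro n p hp
      set S : Set (Fin n → Language Y) := {w | ∀ i, p i w ≤ w i} with hS
      refine ⟨sInf S, fun i => ?_, fun τ hτ i => ?_⟩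
      · have hsi : sInf S i = ⨅ w : S, (w : Fin n → Language Y) i := by
          rw [sInf_apply]
        rw [hsi]
        exact le_iInf fun w => le_trans ((hp i).monotone (sInf_le w.2)) (w.2 i)
      · exact (sInf_le (show τ ∈ S from hτ)) i }

theorem isInterp_langEval {X Y : Type} [DecidableEq X] [Infinite X] :
    IsInterp (fun (σ : X → Language Y) t => langEval t σ) := by
  refine ⟨fun _ _ => rfl, fun _ => rfl, fun _ => rfl, fun _ _ _ => rfl, fun _ _ _ => rfl,
    fun σ x t => ⟨?_, ?_⟩⟩
  · show langEval t (Function.update σ x (langEval (.mu x t) σ)) ≤ langEval (.mu x t) σ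
    set F : Language Y → Language Y := fun a => langEval t (Function.update σ x a) with hF
    have hFmono : Monotone F := fun a a' ha =>
      langEval_mono t (update_le_update (fun _ => le_rfl) ha)
    have h1 : langEval (.mu x t) σ = ⨆ n : ℕ, F^[n] ⊥ := rfl
    rw [h1]
    have hfun : Function.update σ x (⨆ n : ℕ, F^[n] ⊥) =
        fun z => ⨆ n : ℕ, Function.update σ x (F^[n] ⊥) z := by
      funext z
      by_cases hz : z = x
      · subst hz; simp
      · simp [Function.update_of_ne hz]
    show F (⨆ n : ℕ, F^[n] ⊥) ≤ _
    rw [hF]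
    simp only
    rw [hfun, langEval_cont t _ (fun z => by
      by_cases hz : z = x
      · subst hz
        intro a b hab
        simp only [Function.update_self]
        exact iterate_chain_mono hFmono hab
      · intro a b hab
        simp [Function.update_of_ne hz])]
    refine iSup_le fun n => ?_
    rw [show langEval t (Function.update σ x (F^[n] ⊥)) = F^[n+1] ⊥ from
      (Function.iterate_succ_apply' F n ⊥).symm]
    exact le_iSup (fun n : ℕ => F^[n] ⊥) (n + 1)
  · rintro a (ha : langEval t (Function.update σ x a) ≤ a)
    show (⨆ n : ℕ, _) ≤ a
    refine iSup_le fun n => ?_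
    induction n with
    | zero => exact bot_le
    | succ n ihn =>
        rw [Function.iterate_succ_apply']
        exact le_trans (langEval_mono t (update_le_update (fun _ => le_rfl) ihn)) ha

theorem isInterp_unique {X C : Type} [DecidableEq X] [Infinite X] [ChomskyAlgebra C]
    {e1 e2 : (X → C) → MuTerm X → C} (h1 : IsInterp e1) (h2 : IsInterp e2) :
    ∀ (t : MuTerm X) (v : X → C), e1 v t = e2 v t
  | .var x, v => by rw [h1.var, h2.var]
  | .zero, v => by rw [h1.zero, h2.zero]
  | .one, v => by rw [h1.one, h2.one]
  | .add s t, v => by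
      rw [h1.add, h2.add, isInterp_unique h1 h2 s v, isInterp_unique h1 h2 t v]
  | .mul s t, v => by
      rw [h1.mul, h2.mul, isInterp_unique h1 h2 s v, isInterp_unique h1 h2 t v]
  | .mu x t, v => by
      have hset : {a : C | e1 (Function.update v x a) t ≤ a} =
          {a : C | e2 (Function.update v x a) t ≤ a} :=
        Set.ext fun a => by
          simp only [Set.mem_setOf_eq, isInterp_unique h1 h2 t (Function.update v x a)]
      exact (h1.mu v x t).unique (hset ▸ h2.mu v x t)

end PartB
section PartC

variable {X C : Type} [DecidableEq X] [Infinite X] [ChomskyAlgebra C]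
  {eval : (X → C) → MuTerm X → C}

theorem eval_congr (hev : IsInterp eval) :
    ∀ (t : MuTerm X) {v v' : X → C}, (∀ x ∈ MuTerm.fv t, v x = v' x) →
      eval v t = eval v' t
  | .var x, v, v', h => by rw [hev.var, hev.var, h x (by simp [MuTerm.fv])]
  | .zero, v, v', _ => by rw [hev.zero, hev.zero]
  | .one, v, v', _ => by rw [hev.one, hev.one]
  | .add s t, v, v', h => by
      rw [hev.add, hev.add,
        eval_congr hev s (fun x hx => h x (by simp [MuTerm.fv, hx])),
        eval_congr hev t (fun x hx => h x (by simp [MuTerm.fv, hx]))]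
  | .mul s t, v, v', h => by
      rw [hev.mul, hev.mul,
        eval_congr hev s (fun x hx => h x (by simp [MuTerm.fv, hx])),
        eval_congr hev t (fun x hx => h x (by simp [MuTerm.fv, hx]))]
  | .mu x t, v, v', h => by
      have hset : {a : C | eval (Function.update v x a) t ≤ a} =
          {a : C | eval (Function.update v' x a) t ≤ a} := by
        refine Set.ext fun a => ?_
        simp only [Set.mem_setOf_eq]
        rw [eval_congr hev t (v := Function.update v x a) (v' := Function.update v' x a)
          (fun z hz => by
            by_cases hzx : z = x
            · subst hzx; simp
            · simp only [Function.update_of_ne hzx]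
              exact h z (by simp [MuTerm.fv, hz, hzx]))]
      exact (hev.mu v x t).unique (hset ▸ hev.mu v' x t)

theorem eval_rename (hev : IsInterp eval) :
    ∀ (t : MuTerm X) {v : X → C} (y : X) {z : X}, z ∉ MuTerm.vars t →
      eval v (MuTerm.rename y z t) = eval (Function.update v y (v z)) t
  | .var w, v, y, z, hz => by
      by_cases h : w = y
      · subst h
        simp [MuTerm.rename, hev.var]
      · simp only [MuTerm.rename, if_neg h, hev.var, Function.update_of_ne h]
  | .zero, v, y, z, hz => by
      simp only [MuTerm.rename, hev.zero]
  | .one, v, y, z, hz => by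
      simp only [MuTerm.rename, hev.one]
  | .add s t, v, y, z, hz => by
      simp only [MuTerm.vars, Finset.mem_union, not_or] at hz
      simp only [MuTerm.rename, hev.add, eval_rename hev s y hz.1, eval_rename hev t y hz.2]
  | .mul s t, v, y, z, hz => by
      simp only [MuTerm.vars, Finset.mem_union, not_or] at hz
      simp only [MuTerm.rename, hev.mul, eval_rename hev s y hz.1, eval_rename hev t y hz.2]
  | .mu w t, v, y, z, hz => by
      simp only [MuTerm.vars, Finset.mem_insert, not_or] at hz
      by_cases h : w = y
      · subst h
        simp only [MuTerm.rename, if_pos rfl]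
        refine eval_congr hev (.mu w t) fun x hx => ?_
        simp only [MuTerm.fv, Finset.mem_sdiff, Finset.mem_singleton] at hx
        rw [Function.update_of_ne hx.2]
      · simp only [MuTerm.rename, if_neg h]
        have hset : {a : C | eval (Function.update v w a) (MuTerm.rename y z t) ≤ a} =
            {a : C | eval (Function.update (Function.update v y (v z)) w a) t ≤ a} := by
          refine Set.ext fun a => ?_
          simp only [Set.mem_setOf_eq]
          rw [eval_rename hev t y hz.2, Function.update_of_ne hz.1,
            Function.update_comm h]
        exact (hev.mu v w (MuTerm.rename y z t)).unique
          (hset ▸ hev.mu (Function.update v y (v z)) w t)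

theorem eval_subst (hev : IsInterp eval) :
    ∀ (n : ℕ) (t : MuTerm X), MuTerm.size t ≤ n → ∀ (v : X → C) (x : X) (u : MuTerm X),
      eval v (MuTerm.subst x u t) = eval (Function.update v x (eval v u)) t := by
  intro n
  induction n with
  | zero => intro t ht; exact absurd ht (by have := MuTerm.size_pos t; omega)
  | succ n ih =>
    intro t ht v x u
    cases t with
    | var y =>
        by_cases h : y = x
        · subst h
          rw [MuTerm.subst_var, if_pos rfl, hev.var, Function.update_self]
        · rw [MuTerm.subst_var, if_neg h, hev.var, hev.var, Function.update_of_ne h]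
    | zero => rw [MuTerm.subst_zero, hev.zero, hev.zero]
    | one => rw [MuTerm.subst_one, hev.one, hev.one]
    | add s t =>
        simp only [MuTerm.size] at ht
        rw [MuTerm.subst_add, hev.add, hev.add, ih s (by omega), ih t (by omega)]
    | mul s t =>
        simp only [MuTerm.size] at ht
        rw [MuTerm.subst_mul, hev.mul, hev.mul, ih s (by omega), ih t (by omega)]
    | mu y t =>
        simp only [MuTerm.size] at ht
        by_cases h : y = x
        · subst h
          rw [MuTerm.subst_mu_eq]
          refine eval_congr hev (.mu y t) fun w hw => ?_
          simp only [MuTerm.fv, Finset.mem_sdiff, Finset.mem_singleton] at hw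
          rw [Function.update_of_ne hw.2]
        · rw [MuTerm.subst_mu_ne x u t h]
          set z := MuTerm.freshVar t u x with hzdef
          obtain ⟨hz1, hz2, hz3⟩ := MuTerm.freshVar_spec t u x
          rw [← hzdef] at hz1 hz2 hz3
          have hset : {a : C |
              eval (Function.update v z a) (MuTerm.subst x u (MuTerm.rename y z t)) ≤ a} =
              {a : C | eval (Function.update (Function.update v x (eval v u)) y a) t ≤ a} := by
            refine Set.ext fun a => ?_
            simp only [Set.mem_setOf_eq]
            rw [ih (MuTerm.rename y z t) (by rw [MuTerm.size_rename]; omega),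
              eval_rename hev t y (by
                intro hc
                exact hz1 hc)]
            have hu : eval (Function.update v z a) u = eval v u :=
              eval_congr hev u fun w hw =>
                Function.update_of_ne (fun hwz => hz2 (by rw [← hwz]; exact hw)) _ _
            rw [hu]
            have hwz' : Function.update (Function.update v z a) x (eval v u) z = a := by
              rw [Function.update_of_ne hz3, Function.update_self]
            rw [hwz']
            have hcongr : eval (Function.update (Function.update
                (Function.update v z a) x (eval v u)) y a) t =
                eval (Function.update (Function.update v x (eval v u)) y a) t := by
              refine eval_congr hev t fun w hw => ?_
              have hwz : w ≠ z := fun hc => hz1 (MuTerm.mem_vars_of_mem_fv (hc ▸ hw))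
              by_cases hwy : w = y
              · subst hwy
                rw [Function.update_self, Function.update_self]
              · rw [Function.update_of_ne hwy, Function.update_of_ne hwy]
                by_cases hwx : w = x
                · subst hwx
                  rw [Function.update_self, Function.update_self]
                · rw [Function.update_of_ne hwx, Function.update_of_ne hwx,
                    Function.update_of_ne hwz]
            rw [hcongr]
          exact (hev.mu v z (MuTerm.subst x u (MuTerm.rename y z t))).unique
            (hset ▸ hev.mu (Function.update v x (eval v u)) y t)

theorem eval_napprox (hev : IsInterp eval) (v : X → C) (x : X) (t : MuTerm X) :
    ∀ n : ℕ, eval v (MuTerm.napprox n x t) = (fun a => eval (Function.update v x a) t)^[n] 0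
  | 0 => hev.zero v
  | n + 1 => by
      show eval v (MuTerm.subst x (MuTerm.napprox n x t) t) = _
      rw [eval_subst hev (MuTerm.size t) t le_rfl, eval_napprox hev v x t n,
        Function.iterate_succ_apply']

end PartC
section PartD

theorem muCont_lang {Y : Type} : MuContinuous (Language Y) := by
  intro X _ _ eval hev v c d x t
  have he : ∀ (u : MuTerm X) (σ : X → Language Y), eval σ u = langEval u σ :=
    isInterp_unique hev isInterp_langEval
  have hnap : ∀ n : ℕ, eval v (MuTerm.napprox n x t) =
      (fun a => langEval t (Function.update v x a))^[n] (0 : Language Y) := by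
    intro n
    have hfun : (fun a => eval (Function.update v x a) t) =
        fun a => langEval t (Function.update v x a) := funext fun a => he t _
    rw [eval_napprox hev, hfun]
  have hmu : c * eval v (.mu x t) * d =
      ⨆ n : ℕ, c * eval v (MuTerm.napprox n x t) * d := by
    rw [he]
    have h1 : langEval (.mu x t) v =
        ⨆ n : ℕ, eval v (MuTerm.napprox n x t) := by
      show (⨆ n : ℕ, _) = _
      exact iSup_congr fun n => (hnap n).symm
    rw [h1, Language.mul_iSup, Language.iSup_mul]
  rw [hmu]
  exact isLUB_iSup

theorem list_sum_le {K : Type} [IdemSemiring K] :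
    ∀ {l : List K} {a : K}, (∀ b ∈ l, b ≤ a) → l.sum ≤ a
  | [], a, _ => by simp
  | b :: l, a, h => by
      rw [List.sum_cons]
      exact add_le (h b (by simp)) (list_sum_le fun b' hb' => h b' (by simp [hb']))

theorem mul_sum_mul {K α : Type} [IdemSemiring K] (c d : K) (f : α → K) :
    ∀ l : List α, c * (l.map f).sum * d = (l.map fun w => c * f w * d).sum
  | [] => by simp
  | w :: l => by
      simp only [List.map_cons, List.sum_cons, mul_add, add_mul]
      rw [mul_sum_mul c d f l]

theorem wordProd_append {X K : Type} [Monoid K] (σ : X → K) (a b : List X) :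
    wordProd σ (a ++ b) = wordProd σ a * wordProd σ b := by
  simp [wordProd]

theorem exists_chain_bound {Y : Type} {A : ℕ → Language Y} (hA : Monotone A) :
    ∀ l : List (List Y), (∀ w ∈ l, ∃ n, w ∈ A n) → ∃ N, ∀ w ∈ l, w ∈ A N
  | [], _ => ⟨0, by simp⟩
  | w :: l, h => by
      obtain ⟨n, hn⟩ := h w (by simp)
      obtain ⟨N, hN⟩ := exists_chain_bound hA l fun w' hw' => h w' (by simp [hw'])
      refine ⟨max n N, fun w' hw' => ?_⟩
      rcases List.mem_cons.1 hw' with rfl | hw'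
      · exact hA (le_max_left n N) hn
      · exact hA (le_max_right n N) (hN w' hw')

/-- Finite approximations of `c * a * d` by word sums over a language. -/
def apxSet {X K : Type} [Semiring K] (v : X → K) (L : Language X) (c d : K) : Set K :=
  {y | ∃ l : List (List X), (∀ w ∈ l, w ∈ L) ∧ y = c * (l.map (wordProd v)).sum * d}

theorem apx_zero {X K : Type} [IdemSemiring K] (v : X → K) (c d : K) :
    IsLUB (apxSet v (0 : Language X) c d) (c * 0 * d) := by
  constructor
  · rintro y ⟨l, hl, rfl⟩
    have hnil : l = [] := List.eq_nil_iff_forall_not_mem.2 fun w hw =>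
      Language.notMem_zero w (hl w hw)
    subst hnil
    simp
  · intro b hb
    exact hb ⟨[], by simp, by simp⟩

theorem wp_le_of_isLUB {X K : Type} [IdemSemiring K] {v : X → K} {L : Language X} {a : K}
    (C : IsLUB (apxSet v L 1 1) ((1 : K) * a * 1)) {w : List X} (hw : w ∈ L) :
    wordProd v w ≤ a := by
  have h1 := C.1 (show (1 : K) * (([w]).map (wordProd v)).sum * 1 ∈ apxSet v L 1 1 from
    ⟨[w], by simp [hw], rfl⟩)
  simpa using h1

end PartD
theorem claimC {X K : Type} [DecidableEq X] [Infinite X] [ChomskyAlgebra K]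
    (hK : MuContinuous K) {eval : (X → K) → MuTerm X → K} (hev : IsInterp eval) (v : X → K) :
    ∀ (u : MuTerm X) (ρ : X → Language X) (g : X → K),
      (∀ x c d, IsLUB (apxSet v (ρ x) c d) (c * g x * d)) →
      ∀ c d : K, IsLUB (apxSet v (langEval u ρ) c d) (c * eval g u * d)
  | .var x, ρ, g, hcomp, c, d => by
      rw [hev.var]
      exact hcomp x c d
  | .zero, ρ, g, hcomp, c, d => by
      rw [hev.zero]
      exact apx_zero v c d
  | .one, ρ, g, hcomp, c, d => by
      rw [hev.one]
      constructor
      · rintro y ⟨l, hl, rfl⟩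
        refine mul_le_mul' (mul_le_mul' le_rfl (list_sum_le ?_)) le_rfl
        intro b hb
        obtain ⟨w, hw, rfl⟩ := List.mem_map.1 hb
        have hwnil : w = [] := (Language.mem_one w).1 (hl w hw)
        subst hwnil
        simp [wordProd]
      · intro b hb
        refine hb ⟨[[]], fun w hw => ?_, by simp [wordProd]⟩
        have hwnil : w = [] := by simpa using hw
        subst hwnil
        exact Language.nil_mem_one
  | .add s t, ρ, g, hcomp, c, d => by
      have Cs := claimC hK hev v s ρ g hcomp
      have Ct := claimC hK hev v t ρ g hcomp
      rw [hev.add]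
      constructor
      · rintro y ⟨l, hl, rfl⟩
        refine mul_le_mul' (mul_le_mul' le_rfl (list_sum_le ?_)) le_rfl
        intro b hb
        obtain ⟨w, hw, rfl⟩ := List.mem_map.1 hb
        rcases (Language.mem_add _ _ w).1 (hl w hw) with h | h
        · exact le_trans (wp_le_of_isLUB (Cs 1 1) h) (by rw [add_eq_sup]; exact le_sup_left)
        · exact le_trans (wp_le_of_isLUB (Ct 1 1) h) (by rw [add_eq_sup]; exact le_sup_right)
      · intro b hb
        have hs : c * eval g s * d ≤ b := by
          refine (Cs c d).2 ?_
          rintro y ⟨l, hl, rfl⟩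
          exact hb ⟨l, fun w hw => (Language.mem_add _ _ w).2 (Or.inl (hl w hw)), rfl⟩
        have ht : c * eval g t * d ≤ b := by
          refine (Ct c d).2 ?_
          rintro y ⟨l, hl, rfl⟩
          exact hb ⟨l, fun w hw => (Language.mem_add _ _ w).2 (Or.inr (hl w hw)), rfl⟩
        calc c * (eval g s + eval g t) * d = c * eval g s * d + c * eval g t * d := by
              rw [mul_add, add_mul]
          _ ≤ b := add_le hs ht
  | .mul s t, ρ, g, hcomp, c, d => by
      have Cs := claimC hK hev v s ρ g hcomp
      have Ct := claimC hK hev v t ρ g hcomp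
      rw [hev.mul]
      constructor
      · rintro y ⟨l, hl, rfl⟩
        refine mul_le_mul' (mul_le_mul' le_rfl (list_sum_le ?_)) le_rfl
        intro b hb
        obtain ⟨w, hw, rfl⟩ := List.mem_map.1 hb
        obtain ⟨w1, h1, w2, h2, rfl⟩ := Language.mem_mul.1 (hl w hw)
        rw [wordProd_append]
        exact mul_le_mul' (wp_le_of_isLUB (Cs 1 1) h1) (wp_le_of_isLUB (Ct 1 1) h2)
      · intro b hb
        have key : c * eval g s * (eval g t * d) ≤ b := by
          refine (Cs c (eval g t * d)).2 ?_
          rintro y ⟨l1, hl1, rfl⟩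
          rw [mul_sum_mul]
          refine list_sum_le ?_
          intro b' hb'
          obtain ⟨w1, hw1, rfl⟩ := List.mem_map.1 hb'
          have key2 : c * wordProd v w1 * eval g t * d ≤ b := by
            refine (Ct (c * wordProd v w1) d).2 ?_
            rintro y ⟨l2, hl2, rfl⟩
            have heq : c * wordProd v w1 * (l2.map (wordProd v)).sum * d =
                c * ((l2.map fun w2 => w1 ++ w2).map (wordProd v)).sum * d := by
              rw [List.map_map]
              have : (wordProd v ∘ fun w2 => w1 ++ w2) =
                  fun w2 => wordProd v w1 * wordProd v w2 := by
                funext w2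
                simp [Function.comp, wordProd_append]
              rw [this, List.sum_map_mul_left, ← mul_assoc]
            rw [heq]
            refine hb ⟨l2.map fun w2 => w1 ++ w2, ?_, rfl⟩
            intro w hw
            obtain ⟨w2, hw2, rfl⟩ := List.mem_map.1 hw
            exact Language.append_mem_mul (hl1 w1 hw1) (hl2 w2 hw2)
          calc c * wordProd v w1 * (eval g t * d)
              = c * wordProd v w1 * eval g t * d := by rw [mul_assoc (c * wordProd v w1)]
            _ ≤ b := key2
        calc c * (eval g s * eval g t) * d
            = c * eval g s * (eval g t * d) := by
              rw [← mul_assoc c, mul_assoc (c * eval g s)]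
          _ ≤ b := key
  | .mu x u, ρ, g, hcomp, c, d => by
      have hKmu := hK X eval hev g c d x u
      have Fmono : Monotone fun A : Language X => langEval u (Function.update ρ x A) :=
        fun A B h => langEval_mono u (update_le_update (fun _ => le_rfl) h)
      have chain := iterate_chain_mono Fmono
      have compatN : ∀ n : ℕ, ∀ c' d' : K,
          IsLUB (apxSet v ((fun A => langEval u (Function.update ρ x A))^[n] ⊥) c' d')
            (c' * (fun a => eval (Function.update g x a) u)^[n] 0 * d') := by
        intro n
        induction n with
        | zero => exact fun c' d' => apx_zero v c' d'
        | succ n ihn =>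
            intro c' d'
            rw [Function.iterate_succ_apply', Function.iterate_succ_apply']
            refine claimC hK hev v u _ _ (fun z => ?_) c' d'
            by_cases hz : z = x
            · subst hz
              simp only [Function.update_self]
              exact ihn
            · simp only [Function.update_of_ne hz]
              exact hcomp z
      constructor
      · rintro y ⟨l, hl, rfl⟩
        obtain ⟨N, hN⟩ := exists_chain_bound chain l fun w hw =>
          Language.mem_iSup.1 (hl w hw)
        calc c * (l.map (wordProd v)).sum * d
            ≤ c * (fun a => eval (Function.update g x a) u)^[N] 0 * d :=
              (compatN N c d).1 ⟨l, hN, rfl⟩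
          _ = c * eval g (MuTerm.napprox N x u) * d := by rw [eval_napprox hev]
          _ ≤ c * eval g (.mu x u) * d := hKmu.1 ⟨N, rfl⟩
      · intro b hb
        refine hKmu.2 ?_
        rintro y ⟨n, rfl⟩
        show c * eval g (MuTerm.napprox n x u) * d ≤ b
        rw [eval_napprox hev]
        refine (compatN n c d).2 ?_
        rintro y ⟨l, hl, rfl⟩
        exact hb ⟨l, fun w hw => Language.mem_iSup.2 ⟨n, hl w hw⟩, rfl⟩
theorem compat_can {X K : Type} [IdemSemiring K] (v : X → K) (x : X) (c d : K) :
    IsLUB (apxSet v ({[x]} : Language X) c d) (c * v x * d) := by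
  constructor
  · rintro y ⟨l, hl, rfl⟩
    refine mul_le_mul' (mul_le_mul' le_rfl (list_sum_le ?_)) le_rfl
    intro b hb
    obtain ⟨w, hw, rfl⟩ := List.mem_map.1 hb
    have hwx : w = [x] := Set.eq_of_mem_singleton (hl w hw)
    subst hwx
    simp [wordProd]
  · intro b hb
    refine hb ⟨[[x]], fun w hw => ?_, by simp [wordProd]⟩
    have hwx : w = [x] := by simpa using hw
    subst hwx
    rfl

theorem isLangInterp_langEval {X Y : Type} [DecidableEq X] [Infinite X] (σ : X → Language Y) :
    IsLangInterp (fun u : MuTerm X => langEval u σ) := by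
  refine ⟨rfl, rfl, fun s t => rfl, fun s t => rfl, fun x t => ?_⟩
  show (⨆ n : ℕ, _) = ⨆ n : ℕ, langEval (MuTerm.napprox n x t) σ
  exact iSup_congr fun n => (eval_napprox isInterp_langEval σ x t n).symm
/-- For μ-expressions `s, t ∈ T X`, the following are equivalent:
(i) `σ(s) = σ(t)` for every interpretation `σ` over a μ-continuous Chomsky
algebra `K`; (ii) `τ(s) = τ(t)` for the language interpretation `τ` induced by
any assignment of languages over any `Y` to the variables; (iii)
`L_X(s) = L_X(t)` for the canonical interpretation `L_X`. -/
theorem statement0 {X : Type} [DecidableEq X] [Infinite X] (s t : MuTerm X) :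
    ((∀ (K : Type) [ChomskyAlgebra K], MuContinuous K →
        ∀ eval : (X → K) → MuTerm X → K, IsInterp eval →
          ∀ v : X → K, eval v s = eval v t) ↔
      (∀ (Y : Type) (σ : X → Language Y) (τ : MuTerm X → Language Y),
        IsLangInterp τ → (∀ x : X, τ (.var x) = σ x) → τ s = τ t)) ∧
    ((∀ (Y : Type) (σ : X → Language Y) (τ : MuTerm X → Language Y),
        IsLangInterp τ → (∀ x : X, τ (.var x) = σ x) → τ s = τ t) ↔
      (∀ L : MuTerm X → Language X, IsCanonicalInterp L → L s = L t)) := by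
  have hcanI : IsCanonicalInterp (fun u : MuTerm X => langEval u fun x => ({[x]} : Language X)) :=
    ⟨isLangInterp_langEval _, fun x => rfl⟩
  constructor
  · constructor
    · intro hi Y σ τ hτ hvar
      have h1 : ∀ u, τ u = langEval u σ := langInterp_eq_langEval hτ σ hvar
      rw [h1 s, h1 t]
      exact hi (Language Y) muCont_lang (fun σ' t' => langEval t' σ') isInterp_langEval σ
    · intro hii K _ hK eval hev v
      have hL : langEval s (fun x => ({[x]} : Language X)) = langEval t fun x => {[x]} :=
        hii X (fun x => {[x]}) (fun u => langEval u fun x => {[x]})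
          (isLangInterp_langEval _) fun x => rfl
      have Hs := claimC hK hev v s (fun x => {[x]}) v (fun x c d => compat_can v x c d) 1 1
      have Ht := claimC hK hev v t (fun x => {[x]}) v (fun x c d => compat_can v x c d) 1 1
      rw [hL] at Hs
      simpa using Hs.unique Ht
  · constructor
    · intro hii L hL
      exact hii X (fun x => {[x]}) L hL.1 hL.2
    · intro hiii Y σ τ hτ hvar
      have hL : langEval s (fun x => ({[x]} : Language X)) = langEval t fun x => {[x]} :=
        hiii _ hcanI
      have h1 : ∀ u, τ u = langEval u σ := langInterp_eq_langEval hτ σ hvar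
      rw [h1 s, h1 t]
      have Hs := claimC (K := Language Y) muCont_lang isInterp_langEval σ s
        (fun x => {[x]}) σ (fun x c d => compat_can σ x c d) 1 1
      have Ht := claimC (K := Language Y) muCont_lang isInterp_langEval σ t
        (fun x => {[x]}) σ (fun x c d => compat_can σ x c d) 1 1
      rw [hL] at Hs
      simpa using Hs.unique Ht
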